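/- Let f : X → Y be a biquotient map of topological spaces. If every point of X has a compact neighbourhood, then every point of Y has a compact neighbourhood. -/

import Mathlib

/-- A continuous surjection `f : X → Y` is a *biquotient map* if for every `y : Y` and every
family of open subsets of `X` covering `f ⁻¹' {y}`, finitely many members of the family have
images whose union is a neighbourhood of `y`. -/
def IsBiquotientMap {X Y : Type*} [TopologicalSpace X] [TopologicalSpace Y] (f : X → Y) : Prop :=
  Continuous f ∧ Function.Surjective f ∧
    ∀ y : Y, ∀ 𝒰 : Set (Set X), (∀ U ∈ 𝒰, IsOpen U) → f ⁻¹' {y} ⊆ ⋃₀ 𝒰 →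
      ∃ ℱ : Finset (Set X), ↑ℱ ⊆ 𝒰 ∧ (⋃ U ∈ ℱ, f '' U) ∈ nhds y

/-- If `f : X → Y` is a biquotient map and every point of `X` has a compact
neighbourhood, then every point of `Y` has a compact neighbourhood. -/
theorem stmt_10 {X Y : Type*} [TopologicalSpace X] [TopologicalSpace Y]
    (f : X → Y) (hf : IsBiquotientMap f)
    (hX : ∀ x : X, ∃ K : Set X, IsCompact K ∧ K ∈ nhds x) :
    ∀ y : Y, ∃ K : Set Y, IsCompact K ∧ K ∈ nhds y := by
  obtain ⟨hc, hs, hb⟩ := hf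
  intro y
  set 𝒰 : Set (Set X) := {U | IsOpen U ∧ ∃ K, IsCompact K ∧ U ⊆ K} with h𝒰
  have hcov : f ⁻¹' {y} ⊆ ⋃₀ 𝒰 := by
    intro x hx
    obtain ⟨Kx, hKxc, hKxn⟩ := hX x
    exact ⟨interior Kx, ⟨isOpen_interior, Kx, hKxc, interior_subset⟩,
      mem_interior_iff_mem_nhds.2 hKxn⟩
  obtain ⟨ℱ, hℱ𝒰, hnhds⟩ := hb y 𝒰 (fun U hU => hU.1) hcov
  · choose K hKc hKs using fun (U : ℱ) => (hℱ𝒰 U.2).2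
    refine ⟨⋃ U : ℱ, f '' K U, ?_, ?_⟩
    · exact isCompact_iUnion fun U => (hKc U).image hc
    · refine Filter.mem_of_superset hnhds ?_
      intro z hz
      simp only [Set.mem_iUnion] at hz ⊢
      obtain ⟨U, hU, hzU⟩ := hz
      exact ⟨⟨U, hU⟩, Set.image_mono (f := f) (hKs ⟨U, hU⟩) hzU⟩
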